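/- Let p, k, n be naturals with p prime, k > 1 and n > 1. Let 𝒢 be any LCA over (ℤ/p^kℤ)^n with associated matrix B ∈ 𝕃_{p^k}^{n×n}, and let F be the LCA over (ℤ/pℤ)^n determined by the matrix A = (B mod p) ∈ 𝕃_p^{n×n}. Then 𝒢 is positively expansive if and only if F is positively expansive. -/

import Mathlib

open LaurentPolynomial
open scoped Classical

/-- `𝕃 m`: Laurent polynomials over `ℤ/mℤ`. -/
abbrev Lm (m : ℕ) := LaurentPolynomial (ZMod m)

/-- `deg⁺` of a Laurent polynomial: the max of its support (`⊥ = -∞` for `0`). -/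
noncomputable def degP {m : ℕ} (α : Lm m) : WithBot ℤ := (AddMonoidAlgebra.coeff α).support.max

/-- `deg⁻` of a Laurent polynomial: the min of its support (`⊤ = +∞` for `0`). -/
noncomputable def degM {m : ℕ} (α : Lm m) : WithTop ℤ := (AddMonoidAlgebra.coeff α).support.min

/-- A monic polynomial `π(t) = α₀ + α₁ t + ⋯ + α_{n-1} t^{n-1} + tⁿ` over `𝕃 m`
is *expansive* if `α₀ ≠ 0`, `deg⁺(α₀) > 0`, `deg⁺(α₀) > deg⁺(αᵢ)`,
`deg⁻(α₀) < 0` and `deg⁻(α₀) < deg⁻(αᵢ)` for all `1 ≤ i ≤ n-1`. -/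
def ExpansivePoly {m : ℕ} (π : Polynomial (Lm m)) : Prop :=
  π.coeff 0 ≠ 0 ∧
  ((0 : WithBot ℤ) < degP (π.coeff 0) ∧
    ∀ i : ℕ, 1 ≤ i → i < π.natDegree → degP (π.coeff i) < degP (π.coeff 0)) ∧
  (degM (π.coeff 0) < (0 : WithTop ℤ) ∧
    ∀ i : ℕ, 1 ≤ i → i < π.natDegree → degM (π.coeff 0) < degM (π.coeff i))

/-- A matrix over `𝕃 m` is expansive if its characteristic polynomial is. -/
noncomputable def ExpansiveMatrix {m n : ℕ} (A : Matrix (Fin n) (Fin n) (Lm m)) : Prop :=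
  ExpansivePoly A.charpoly

/-- The Tychonoff distance on the configuration space `(ℤ → S)`. -/
noncomputable def tdist {S : Type*} (c c' : ℤ → S) : ℝ :=
  if c = c' then 0
  else (2 : ℝ) ^ (-((sInf {k : ℕ | ∃ j : ℤ, j.natAbs = k ∧ c j ≠ c' j} : ℕ) : ℤ))

/-- A map on the configuration space is positively expansive if for some `ε > 0`
any two distinct configurations are eventually `≥ ε` apart. -/
def PosExpansive {S : Type*} (F : (ℤ → S) → (ℤ → S)) : Prop :=
  ∃ ε : ℝ, 0 < ε ∧ ∀ c c' : ℤ → S, c ≠ c' →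
    ∃ ℓ : ℕ, ε ≤ tdist (F^[ℓ] c) (F^[ℓ] c')

/-- The linear CA over `(ℤ/mℤ)ⁿ` determined by a matrix `A ∈ 𝕃_m^{n×n}`:
`F_A(c)_i = ∑_{k ∈ ℤ} A⁽ᵏ⁾ · c_{i-k}` where `A⁽ᵏ⁾` is the coefficient matrix of `Xᵏ` in `A`.
The same formula gives the action of `A` on two-sided formal power series `𝕊_m^n`. -/
noncomputable def lcaFun {m n : ℕ} (A : Matrix (Fin n) (Fin n) (Lm m)) :
    (ℤ → Fin n → ZMod m) → (ℤ → Fin n → ZMod m) :=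
  fun c i a => ∑ b, Finsupp.sum (AddMonoidAlgebra.coeff (A a b)) (fun k coef => coef * c (i - k) b)

/-- `Left(𝕊ⁿ_m, s)`: two-sided series with `deg⁺ = s`. -/
def SLeft {V : Type*} [Zero V] (s : ℤ) : Set (ℤ → V) :=
  {υ | (∀ j : ℤ, s < j → υ j = 0) ∧ υ s ≠ 0}

/-- `Left*(𝕊ⁿ_m, s)`: two-sided series with `deg⁺ ≤ s`. -/
def SLeftStar {V : Type*} [Zero V] (s : ℤ) : Set (ℤ → V) :=
  {υ | ∀ j : ℤ, s < j → υ j = 0}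

/-- `Right(𝕊ⁿ_m, s)`: two-sided series with `deg⁻ = s`. -/
def SRight {V : Type*} [Zero V] (s : ℤ) : Set (ℤ → V) :=
  {υ | (∀ j : ℤ, j < s → υ j = 0) ∧ υ s ≠ 0}

/-- `Right*(𝕊ⁿ_m, s)`: two-sided series with `deg⁻ ≥ s`. -/
def SRightStar {V : Type*} [Zero V] (s : ℤ) : Set (ℤ → V) :=
  {υ | ∀ j : ℤ, j < s → υ j = 0}

/-- Reduction of a Laurent polynomial over `ℤ/mℤ` modulo `q` (for `q ∣ m`). -/
noncomputable def lmod {m q : ℕ} (h : q ∣ m) (α : Lm m) : Lm q :=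
  AddMonoidAlgebra.ofCoeff (Finsupp.mapRange (ZMod.castHom h (ZMod q)) (map_zero _) (AddMonoidAlgebra.coeff α))

/-- Entrywise reduction of a matrix of Laurent polynomials modulo `q`. -/
noncomputable def matMod {m q n : ℕ} (h : q ∣ m) (B : Matrix (Fin n) (Fin n) (Lm m)) :
    Matrix (Fin n) (Fin n) (Lm q) :=
  fun a b => lmod h (B a b)

/-- `deg⁺` on the field of fractions of `𝕃 p`: `deg⁺(α/β) = deg⁺(α) - deg⁺(β)`,
computed on a representation given by `IsLocalization.sec`; `deg⁺ 0 = ⊥`. -/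
noncomputable def degPF {p : ℕ} (φ : FractionRing (Lm p)) : WithBot ℤ :=
  if φ = 0 then ⊥
  else (((degP ((IsLocalization.sec (nonZeroDivisors (Lm p)) φ).1)).unbotD 0
        - (degP (((IsLocalization.sec (nonZeroDivisors (Lm p)) φ).2 : Lm p))).unbotD 0 : ℤ) : WithBot ℤ)

/-- The `(x, y)` entry (with `ℕ`-indices) of the companion matrix of a polynomial `π`
viewed as a `d × d` matrix: subdiagonal entries `1`,
last column `(-π.coeff 0, …, -π.coeff (d-1))ᵀ`, the rest `0`. -/
def companionEntry {R : Type*} [CommRing R] (d : ℕ) (π : Polynomial R) (x y : ℕ) : R :=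
  if y = d - 1 then -π.coeff x else if x = y + 1 then 1 else 0

/-- The companion matrix (as a `d × d` matrix) of a polynomial `π`. -/
def companionMatrix {R : Type*} [CommRing R] (d : ℕ) (π : Polynomial R) :
    Matrix (Fin d) (Fin d) R :=
  fun a b => companionEntry d π a b

/-- A matrix is in rational canonical form if it is block diagonal with blocks the
companion matrices of monic polynomials `π₁, …, π_s` of degree at least one with
`πᵢ ∣ πⱼ` for `i ≤ j`.  The blocks are described by the offsets `off i` of their
top-left corners. -/
def IsRCF {R : Type*} [CommRing R] {n : ℕ} (C : Matrix (Fin n) (Fin n) R) : Prop :=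
  ∃ (s : ℕ) (π : Fin s → Polynomial R) (off : Fin (s + 1) → ℕ),
    (∀ i, (π i).Monic) ∧ (∀ i, 1 ≤ (π i).natDegree) ∧
    (∀ i j, i ≤ j → π i ∣ π j) ∧
    off 0 = 0 ∧ off (Fin.last s) = n ∧
    (∀ i : Fin s, off i.succ = off i.castSucc + (π i).natDegree) ∧
    (∀ (i : Fin s) (a b : Fin n),
      off i.castSucc ≤ (a : ℕ) → (a : ℕ) < off i.succ →
      off i.castSucc ≤ (b : ℕ) → (b : ℕ) < off i.succ →
      C a b = companionEntry (π i).natDegree (π i)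
        ((a : ℕ) - off i.castSucc) ((b : ℕ) - off i.castSucc)) ∧
    (∀ a b : Fin n,
      (∀ i : Fin s, ¬(off i.castSucc ≤ (a : ℕ) ∧ (a : ℕ) < off i.succ ∧
        off i.castSucc ≤ (b : ℕ) ∧ (b : ℕ) < off i.succ)) → C a b = 0)

section AuxIota
variable {p k : ℕ}

/-- key: multiplying by `p^(k-1)` kills mod-`p` information. -/
lemma pk_cast_mod (hk : k ≠ 0) (u : ℕ) :
    ((p : ZMod (p^k)))^(k-1) * (u : ZMod (p^k))
      = ((p : ZMod (p^k)))^(k-1) * ((u % p : ℕ) : ZMod (p^k)) := by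
  have hpk : ((p : ZMod (p^k)))^(k-1) * (p : ZMod (p^k)) = 0 := by
    rw [← pow_succ, show k - 1 + 1 = k by omega, ← Nat.cast_pow, ZMod.natCast_self]
  conv_lhs => rw [← Nat.div_add_mod u p]
  push_cast
  rw [mul_add, ← mul_assoc, hpk, zero_mul, zero_add]

noncomputable def iota (p k : ℕ) : ZMod p → ZMod (p^k) :=
  fun x => (p : ZMod (p^k))^(k-1) * ((x.val : ℕ) : ZMod (p^k))

lemma iota_zero (hp : p.Prime) : iota p k 0 = 0 := by
  haveI : NeZero p := ⟨hp.pos.ne'⟩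
  simp [iota]

lemma iota_add (hp : p.Prime) (hk : k ≠ 0) (x y : ZMod p) :
    iota p k (x + y) = iota p k x + iota p k y := by
  haveI : NeZero p := ⟨hp.pos.ne'⟩
  unfold iota
  rw [ZMod.val_add, ← pk_cast_mod hk, Nat.cast_add, mul_add]

lemma iota_scal (hp : p.Prime) (hk : k ≠ 0) (a : ZMod (p^k)) (x : ZMod p) :
    iota p k ((ZMod.castHom (dvd_pow_self p hk) (ZMod p) a) * x) = a * iota p k x := by
  haveI : NeZero p := ⟨hp.pos.ne'⟩
  haveI : NeZero (p^k) := ⟨pow_ne_zero _ hp.pos.ne'⟩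
  have ha : (ZMod.castHom (dvd_pow_self p hk) (ZMod p) a) = ((a.val : ℕ) : ZMod p) := by
    rw [ZMod.castHom_apply, ← ZMod.natCast_val]
  rw [ha]
  unfold iota
  rw [ZMod.val_mul, ZMod.val_natCast, ← pk_cast_mod hk]
  have hmod : a.val % p * x.val % p = a.val * x.val % p := by
    conv_lhs => rw [Nat.mul_mod, Nat.mod_mod_of_dvd _ (dvd_refl p)]
    rw [Nat.mul_mod a.val x.val p]
  rw [show (a.val % p * x.val : ℕ) = a.val % p * x.val from rfl]
  rw [pk_cast_mod hk (a.val % p * x.val), hmod, ← pk_cast_mod hk]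
  conv_rhs => rw [← ZMod.natCast_zmod_val a]
  push_cast
  ring

lemma iota_inj (hp : p.Prime) (hk : k ≠ 0) : Function.Injective (iota p k) := by
  haveI : NeZero p := ⟨hp.pos.ne'⟩
  intro x y h
  have hb : ∀ z : ZMod p, p ^ (k-1) * z.val < p ^ k := by
    intro z
    calc p ^ (k-1) * z.val < p ^ (k-1) * p :=
      (Nat.mul_lt_mul_left (Nat.pow_pos hp.pos)).mpr (ZMod.val_lt z)
    _ = p ^ k := by rw [← pow_succ]; congr 1; omega
  have h2 : ((p^(k-1) * x.val : ℕ) : ZMod (p^k)) = ((p^(k-1) * y.val : ℕ) : ZMod (p^k)) := by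
    push_cast
    simpa [iota] using h
  have h3 := congrArg ZMod.val h2
  rw [ZMod.val_natCast, ZMod.val_natCast, Nat.mod_eq_of_lt (hb x), Nat.mod_eq_of_lt (hb y)] at h3
  have hv : x.val = y.val :=
    Nat.eq_of_mul_eq_mul_left (Nat.pow_pos hp.pos) h3
  calc x = ((x.val : ℕ) : ZMod p) := (ZMod.natCast_zmod_val x).symm
    _ = ((y.val : ℕ) : ZMod p) := by rw [hv]
    _ = y := ZMod.natCast_zmod_val y

lemma iota_surj_tor (hp : p.Prime) (hk : k ≠ 0) (x : ZMod (p^k))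
    (hx : (p : ZMod (p^k)) * x = 0) : ∃ y : ZMod p, iota p k y = x := by
  haveI : NeZero p := ⟨hp.pos.ne'⟩
  haveI : NeZero (p^k) := ⟨pow_ne_zero _ hp.pos.ne'⟩
  have h1 : ((p * x.val : ℕ) : ZMod (p^k)) = 0 := by
    push_cast [ZMod.natCast_zmod_val]; exact hx
  have h2 : p^k ∣ p * x.val := (ZMod.natCast_eq_zero_iff _ _).mp h1
  have h3 : p^(k-1) ∣ x.val := by
    have h4 : p * p^(k-1) ∣ p * x.val := by
      rw [← pow_succ', show k - 1 + 1 = k by omega]; exact h2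
    exact (mul_dvd_mul_iff_left (by exact_mod_cast hp.pos.ne' : p ≠ 0)).mp h4
  obtain ⟨w, hw⟩ := h3
  have hwp : w < p := by
    have : p ^ (k-1) * w < p ^ (k-1) * p := by
      calc p ^ (k-1) * w = x.val := hw.symm
      _ < p ^ k := ZMod.val_lt x
      _ = p ^ (k-1) * p := by rw [← pow_succ]; congr 1; omega
    exact Nat.lt_of_mul_lt_mul_left this
  refine ⟨(w : ZMod p), ?_⟩
  unfold iota
  rw [ZMod.val_natCast, Nat.mod_eq_of_lt hwp]
  calc (p : ZMod (p^k))^(k-1) * (w : ZMod (p^k)) = ((p^(k-1) * w : ℕ) : ZMod (p^k)) := by push_cast; ring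
    _ = ((x.val : ℕ) : ZMod (p^k)) := by rw [← hw]
    _ = x := ZMod.natCast_zmod_val x

end AuxIota

section AuxLCA
variable {m n : ℕ}

lemma lcaFun_sub (A : Matrix (Fin n) (Fin n) (Lm m)) (c c' : ℤ → Fin n → ZMod m) :
    lcaFun A (c - c') = lcaFun A c - lcaFun A c' := by
  funext i a
  simp only [lcaFun, Pi.sub_apply, mul_sub, Finsupp.sum_sub, Finset.sum_sub_distrib]

lemma lcaFun_zero (A : Matrix (Fin n) (Fin n) (Lm m)) : lcaFun A 0 = 0 := by
  funext i a
  simp [lcaFun]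

lemma lcaFun_smul (A : Matrix (Fin n) (Fin n) (Lm m)) (r : ZMod m) (c : ℤ → Fin n → ZMod m) :
    lcaFun A (fun j b => r * c j b) = fun i a => r * lcaFun A c i a := by
  funext i a
  simp only [lcaFun, Finset.mul_sum, Finsupp.mul_sum]
  refine Finset.sum_congr rfl fun b _ => Finsupp.sum_congr fun K _ => by ring

lemma lcaFun_iter_sub (A : Matrix (Fin n) (Fin n) (Lm m)) (l : ℕ) (c c' : ℤ → Fin n → ZMod m) :
    (lcaFun A)^[l] (c - c') = (lcaFun A)^[l] c - (lcaFun A)^[l] c' := by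
  induction l with
  | zero => simp
  | succ l ih => simp only [Function.iterate_succ_apply', ih, lcaFun_sub]

lemma lcaFun_iter_smul (A : Matrix (Fin n) (Fin n) (Lm m)) (l : ℕ) (r : ZMod m)
    (c : ℤ → Fin n → ZMod m) :
    (lcaFun A)^[l] (fun j b => r * c j b) = fun i a => r * (lcaFun A)^[l] c i a := by
  induction l with
  | zero => simp
  | succ l ih => simp only [Function.iterate_succ_apply', ih, lcaFun_smul]

end AuxLCA

section AuxInter
variable {p k n : ℕ}

lemma lca_iota (hp : p.Prime) (hk : k ≠ 0) (B : Matrix (Fin n) (Fin n) (Lm (p^k)))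
    (c : ℤ → Fin n → ZMod p) :
    lcaFun B (fun j b => iota p k (c j b)) =
      fun i a => iota p k (lcaFun (matMod (dvd_pow_self p hk) B) c i a) := by
  funext i a
  simp only [lcaFun, matMod, lmod, AddMonoidAlgebra.coeff_ofCoeff]
  let ih : ZMod p →+ ZMod (p^k) := AddMonoidHom.mk' (iota p k) (iota_add hp hk)
  have hih : iota p k = ⇑ih := rfl
  rw [hih, map_sum]
  refine Finset.sum_congr rfl fun b _ => ?_
  rw [Finsupp.sum_mapRange_index (by intro K; simp), map_finsuppSum]
  refine Finsupp.sum_congr fun K _ => ?_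
  show _ = iota p k _
  rw [iota_scal hp hk]
  rfl

lemma lca_iter_iota (hp : p.Prime) (hk : k ≠ 0) (B : Matrix (Fin n) (Fin n) (Lm (p^k)))
    (l : ℕ) (c : ℤ → Fin n → ZMod p) :
    (lcaFun B)^[l] (fun j b => iota p k (c j b)) =
      fun i a => iota p k ((lcaFun (matMod (dvd_pow_self p hk) B))^[l] c i a) := by
  induction l generalizing c with
  | zero => simp
  | succ l ih =>
      rw [Function.iterate_succ_apply, Function.iterate_succ_apply, lca_iota hp hk, ih]

end AuxInter

section AuxTdist

lemma tdist_self {S : Type*} (c : ℤ → S) : tdist c c = 0 := by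
  rw [tdist, if_pos rfl]

lemma tdist_mono {S T : Type*} (c c' : ℤ → S) (d d' : ℤ → T) (hne : d ≠ d')
    (h : ∀ j, d j ≠ d' j → c j ≠ c' j) : tdist d d' ≤ tdist c c' := by
  obtain ⟨j0, hj0⟩ := Function.ne_iff.mp hne
  have hcc : c ≠ c' := Function.ne_iff.mpr ⟨j0, h j0 hj0⟩
  rw [tdist, tdist, if_neg hne, if_neg hcc]
  have hdne : {K : ℕ | ∃ j : ℤ, j.natAbs = K ∧ d j ≠ d' j}.Nonempty :=
    ⟨j0.natAbs, j0, rfl, hj0⟩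
  have hsub : {K : ℕ | ∃ j : ℤ, j.natAbs = K ∧ d j ≠ d' j} ⊆
      {K : ℕ | ∃ j : ℤ, j.natAbs = K ∧ c j ≠ c' j} := by
    rintro K ⟨j, hjK, hj⟩; exact ⟨j, hjK, h j hj⟩
  have h1 : sInf {K : ℕ | ∃ j : ℤ, j.natAbs = K ∧ c j ≠ c' j}
      ≤ sInf {K : ℕ | ∃ j : ℤ, j.natAbs = K ∧ d j ≠ d' j} :=
    Nat.sInf_le (hsub (Nat.sInf_mem hdne))
  exact zpow_le_zpow_right₀ one_le_two (neg_le_neg (by exact_mod_cast h1))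

end AuxTdist

/-- part of Lemma `rispk`: an LCA `𝒢` over `(ℤ/pᵏℤ)ⁿ` with associated
matrix `B` is positively expansive iff the LCA `F` over `(ℤ/pℤ)ⁿ` determined by
`A = B mod p` is positively expansive. -/
theorem stmt11 (p k n : ℕ) (hp : p.Prime) (hk : 1 < k) (hn : 1 < n)
    (B : Matrix (Fin n) (Fin n) (Lm (p ^ k)))
    (G : (ℤ → Fin n → ZMod (p ^ k)) → (ℤ → Fin n → ZMod (p ^ k))) (hG : G = lcaFun B)
    (F : (ℤ → Fin n → ZMod p) → (ℤ → Fin n → ZMod p))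
    (hF : F = lcaFun (matMod (dvd_pow_self p (by omega : k ≠ 0)) B)) :
    PosExpansive G ↔ PosExpansive F := by
  have hk0 : k ≠ 0 := by omega
  constructor
  · rintro ⟨ε, hε, hexp⟩
    refine ⟨ε, hε, fun c c' hcc => ?_⟩
    obtain ⟨l, hl⟩ := hexp (fun j b => iota p k (c j b)) (fun j b => iota p k (c' j b))
      (by
        intro hEq
        apply hcc
        funext j b
        exact iota_inj hp hk0 (congrFun (congrFun hEq j) b))
    refine ⟨l, le_trans hl ?_⟩
    have e1 : G^[l] (fun j b => iota p k (c j b)) = fun j b => iota p k (F^[l] c j b) := by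
      rw [hG, hF]; exact lca_iter_iota hp hk0 B l c
    have e2 : G^[l] (fun j b => iota p k (c' j b)) = fun j b => iota p k (F^[l] c' j b) := by
      rw [hG, hF]; exact lca_iter_iota hp hk0 B l c'
    have hGne : G^[l] (fun j b => iota p k (c j b)) ≠ G^[l] (fun j b => iota p k (c' j b)) := by
      intro hEq; rw [hEq, tdist_self] at hl; linarith
    refine tdist_mono _ _ _ _ hGne ?_
    intro j hj hFj
    apply hj
    rw [e1, e2]
    simp only [hFj]
  · rintro ⟨ε, hε, hexp⟩
    refine ⟨ε, hε, fun C C' hCC => ?_⟩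
    have he : C - C' ≠ 0 := sub_ne_zero.mpr hCC
    have hex0 : ∃ s : ℕ, (fun (j : ℤ) (b : Fin n) => (p : ZMod (p^k))^s * (C - C') j b) = 0 :=
      ⟨k, by funext j b; rw [← Nat.cast_pow, ZMod.natCast_self, zero_mul]; rfl⟩
    set N := Nat.find hex0 with hN
    have hN0 : N ≠ 0 := by
      intro h0
      apply he
      have hs := Nat.find_spec hex0
      rw [← hN, h0] at hs
      funext j b
      have := congrFun (congrFun hs j) b
      simpa using this
    have hd_ne : (fun (j : ℤ) (b : Fin n) => (p : ZMod (p^k))^(N-1) * (C - C') j b) ≠ 0 :=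
      Nat.find_min hex0 (by omega)
    have hpd : ∀ (j : ℤ) (b : Fin n),
        (p : ZMod (p^k)) * ((p : ZMod (p^k))^(N-1) * (C - C') j b) = 0 := by
      intro j b
      have h1 := congrFun (congrFun (Nat.find_spec hex0) j) b
      have h2 : (p : ZMod (p^k))^N * (C - C') j b = 0 := by simpa using h1
      calc (p : ZMod (p^k)) * ((p : ZMod (p^k))^(N-1) * (C - C') j b)
          = (p : ZMod (p^k))^N * (C - C') j b := by
            rw [← mul_assoc, ← pow_succ', show N - 1 + 1 = N by omega]
        _ = 0 := h2
    choose g hg using fun (j : ℤ) (b : Fin n) => iota_surj_tor hp hk0 _ (hpd j b)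
    have hgne : g ≠ 0 := by
      intro h0
      apply hd_ne
      funext j b
      have hgjb := hg j b
      rw [h0] at hgjb
      have : iota p k ((0 : ℤ → Fin n → ZMod p) j b) = 0 := iota_zero hp
      rw [this] at hgjb
      exact hgjb.symm
    obtain ⟨l, hl⟩ := hexp g 0 hgne
    have hF0 : F^[l] (0 : ℤ → Fin n → ZMod p) = 0 := by
      rw [hF]; exact Function.iterate_fixed (lcaFun_zero _) l
    rw [hF0] at hl
    refine ⟨l, le_trans hl ?_⟩
    have hFgne : F^[l] g ≠ (0 : ℤ → Fin n → ZMod p) := by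
      intro hEq; rw [hEq, tdist_self] at hl; linarith
    have key1 : G^[l] (fun j b => iota p k (g j b)) = fun j b => iota p k (F^[l] g j b) := by
      rw [hG, hF]; exact lca_iter_iota hp hk0 B l g
    have key2 : (fun (j : ℤ) (b : Fin n) => iota p k (g j b))
        = fun j b => (p : ZMod (p^k))^(N-1) * (C - C') j b := by
      funext j b; exact hg j b
    have key3 : G^[l] (fun j b => (p : ZMod (p^k))^(N-1) * (C - C') j b)
        = fun i a => (p : ZMod (p^k))^(N-1) * (G^[l] (C - C')) i a := by
      rw [hG]; exact lcaFun_iter_smul B l _ (C - C')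
    have key4 : G^[l] (C - C') = G^[l] C - G^[l] C' := by
      rw [hG]; exact lcaFun_iter_sub B l C C'
    have hchain : (fun (j : ℤ) (b : Fin n) => iota p k (F^[l] g j b))
        = fun i a => (p : ZMod (p^k))^(N-1) * ((G^[l] C) i a - (G^[l] C') i a) := by
      rw [← key1, key2, key3, key4]
      funext i a
      simp [Pi.sub_apply]
    refine tdist_mono _ _ _ _ hFgne ?_
    intro j hj hGj
    apply hj
    funext b
    apply iota_inj hp hk0
    show iota p k (F^[l] g j b) = iota p k 0
    rw [iota_zero hp]
    have h5 := congrFun (congrFun hchain j) b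
    rw [congrFun hGj b] at h5
    simpa using h5
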